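/- Every IMM* algebra is an IMM algebra: if (C, ¯(), ⊕, ·, 1) is an IMM* algebra, then it satisfies all the axioms of an IMM algebra; in particular a̿ = a and ¯(a⊕b) = ā⊕b̄ hold for all a, b ∈ C. -/
import Mathlib


/-- An involutive medial monoid (IMM) algebra. -/
structure IMM (B : Type*) where
  inv : B → B
  oplus : B → B → B
  mul : B → B → B
  one : B
  B1 : ∀ a, oplus a a = a
  B2 : ∀ a b, oplus a b = oplus b a
  B3 : ∀ a b c d, oplus (oplus a b) (oplus c d) = oplus (oplus a c) (oplus b d)
  B4 : ∀ a b c, mul a (mul b c) = mul (mul a b) c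
  B5 : ∀ a, mul a one = a
  B5' : ∀ a, mul one a = a
  B6 : ∀ a b c, mul a (oplus b c) = oplus (mul a b) (mul a c)
  B6' : ∀ a b c, mul (oplus a b) c = oplus (mul a c) (mul b c)
  B7 : ∀ a, inv (inv a) = a
  B8 : ∀ a b, inv (oplus a b) = oplus (inv a) (inv b)
  B9 : ∀ a, mul a (inv one) = inv one
  B9' : ∀ a, mul (inv one) a = inv one
  B10 : ∀ a, oplus (inv a) a = oplus (inv one) one

/-- An IMM* algebra: like an IMM algebra but with cancellative `⊕`
(axioms (C1)-(C9)). -/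
structure IMMStar (C : Type*) where
  inv : C → C
  oplus : C → C → C
  mul : C → C → C
  one : C
  C1 : ∀ a, oplus a a = a
  C2 : ∀ a b, oplus a b = oplus b a
  C3 : ∀ a a' b, oplus a b = oplus a' b → a = a'
  C4 : ∀ a b c d, oplus (oplus a b) (oplus c d) = oplus (oplus a c) (oplus b d)
  C5 : ∀ a b c, mul a (mul b c) = mul (mul a b) c
  C6 : ∀ a, mul a one = a
  C6' : ∀ a, mul one a = a
  C7 : ∀ a b c, mul a (oplus b c) = oplus (mul a b) (mul a c)
  C7' : ∀ a b c, mul (oplus a b) c = oplus (mul a c) (mul b c)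
  C8 : ∀ a, mul a (inv one) = inv one
  C8' : ∀ a, mul (inv one) a = inv one
  C9 : ∀ a, oplus (inv a) a = oplus (inv one) one

/-- Every IMM* algebra is an IMM algebra; in particular the involution
and complement-of-midpoints laws hold. -/
theorem IMMStar_to_IMM {C : Type*} (S : IMMStar C) :
    (∃ I : IMM C,
      I.inv = S.inv ∧ I.oplus = S.oplus ∧ I.mul = S.mul ∧ I.one = S.one) ∧
    (∀ a, S.inv (S.inv a) = a) ∧
    (∀ a b, S.inv (S.oplus a b) = S.oplus (S.inv a) (S.inv b)) := by
  have hinv : ∀ a, S.inv (S.inv a) = a := by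
    intro a
    apply S.C3 _ _ (S.inv a)
    rw [S.C9, S.C2 a (S.inv a), S.C9 a]
  have hB8 : ∀ a b, S.inv (S.oplus a b) = S.oplus (S.inv a) (S.inv b) := by
    intro a b
    apply S.C3 _ _ (S.oplus a b)
    rw [S.C9 (S.oplus a b), S.C4, S.C9 a, S.C9 b, S.C1]
  exact ⟨⟨IMM.mk S.inv S.oplus S.mul S.one S.C1 S.C2 S.C4 S.C5 S.C6 S.C6'
    S.C7 S.C7' hinv hB8 S.C8 S.C8' S.C9, rfl, rfl, rfl, rfl⟩, hinv, hB8⟩
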